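/- arXiv:2010.00412 — 9 statements merged into one kernel-verified Lean document; each statement's English description precedes it below -/
import Mathlib

section
/- Let 0 < L ≤ U with θ = U/L > 1, C > 0, and α ≥ 1. Suppose φ: [0, C] → ℝ is non-decreasing with φ(w) = L on [0, β) for some β ∈ [0, C], φ(β) = L, φ(C) ≥ U, and φ(w)·C ≤ α·∫₀^w φ(u) du for all w ∈ [β, C]. Then α ≥ 1 + ln θ. -/
open intervalIntegral Filter Real MeasureTheory

theorem got_sufficient_lower_bound (L U C θ α β : ℝ) (hL : 0 < L) (hLU : L ≤ U)
    (hθ : θ = U / L) (hθ1 : 1 < θ) (hC : 0 < C) (hα : 1 ≤ α)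
    (hβ : β ∈ Set.Icc (0:ℝ) C)
    (φ : ℝ → ℝ) (hmono : MonotoneOn φ (Set.Icc 0 C))
    (hflat : ∀ w ∈ Set.Ico (0:ℝ) β, φ w = L)
    (hβval : φ β = L) (hCval : U ≤ φ C)
    (hode : ∀ w ∈ Set.Icc β C, φ w * C ≤ α * ∫ u in (0:ℝ)..w, φ u) :
    1 + Real.log θ ≤ α := by
  obtain ⟨hβ0, hβC⟩ := hβ
  have hα0 : (0:ℝ) < α := lt_of_lt_of_le one_pos hα
  set F : ℝ → ℝ := fun w => ∫ u in (0:ℝ)..w, φ u with hF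
  -- integrability on subintervals of [0, C]
  have hint : ∀ a b : ℝ, 0 ≤ a → b ≤ C → a ≤ b → IntervalIntegrable φ volume a b := by
    intro a b ha hb hab
    exact (hmono.mono (by rw [Set.uIcc_of_le hab]; exact Set.Icc_subset_Icc ha hb)).intervalIntegrable
  -- F β = L * β
  have hFβ : F β = L * β := by
    have : F β = ∫ u in (0:ℝ)..β, L := by
      apply intervalIntegral.integral_congr
      intro w hw
      rw [Set.uIcc_of_le hβ0] at hw
      rcases lt_or_eq_of_le hw.2 with h | h
      · exact hflat w ⟨hw.1, h⟩
      · rw [h]; exact hβval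
    rw [this, intervalIntegral.integral_const, smul_eq_mul, sub_zero, mul_comm]
  -- β ≥ C / α, hence β > 0
  have hβlow : C ≤ α * β := by
    have h := hode β ⟨le_refl β, hβC⟩
    rw [hβval] at h
    have h2 : L * C ≤ α * (L * β) := by rw [← hFβ, hF]; exact h
    nlinarith
  have hβpos : 0 < β := by nlinarith
  have hFβpos : 0 < F β := by rw [hFβ]; positivity
  -- key step:  for β ≤ w ≤ w' ≤ C :  F w' * (1 - α*(w'-w)/C) ≤ F w
  have hstep : ∀ w w' : ℝ, β ≤ w → w ≤ w' → w' ≤ C →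
      F w' * (1 - α * (w' - w) / C) ≤ F w := by
    intro w w' hw hww hw'
    have h0w : (0:ℝ) ≤ w := le_trans hβ0 hw
    have hsum : F w + ∫ u in w..w', φ u = F w' :=
      intervalIntegral.integral_add_adjacent_intervals
        (hint 0 w le_rfl (le_trans hww hw') h0w) (hint w w' h0w hw' hww)
    have hbound : (∫ u in w..w', φ u) ≤ (w' - w) * φ w' := by
      have : (∫ u in w..w', φ u) ≤ ∫ u in w..w', φ w' :=
        intervalIntegral.integral_mono_on hww (hint w w' h0w hw' hww)
          intervalIntegrable_const
          (fun x hx => hmono ⟨le_trans h0w hx.1, le_trans hx.2 hw'⟩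
            ⟨le_trans h0w hww, hw'⟩ hx.2)
      rwa [intervalIntegral.integral_const, smul_eq_mul] at this
    have hφ : φ w' * C ≤ α * F w' := hode w' ⟨le_trans hw hww, hw'⟩
    have hFw' : F w ≤ F w' := by
      have : (0:ℝ) ≤ ∫ u in w..w', φ u := by
        apply intervalIntegral.integral_nonneg hww
        intro x hx
        have hx0 : (0:ℝ) ≤ x := le_trans h0w hx.1
        have : L ≤ φ x := by
          calc L = φ β := hβval.symm
          _ ≤ φ x := hmono ⟨hβ0, hβC⟩ ⟨hx0, le_trans hx.2 hw'⟩ (le_trans hw hx.1)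
        linarith
      linarith
    -- F w' ≤ F w + (w'-w) * α * F w' / C
    have h1 : F w' ≤ F w + (w' - w) * (α * F w' / C) := by
      have hφle : φ w' ≤ α * F w' / C := by
        rw [le_div_iff₀ hC]; linarith
      have : (∫ u in w..w', φ u) ≤ (w' - w) * (α * F w' / C) := by
        calc (∫ u in w..w', φ u) ≤ (w' - w) * φ w' := hbound
        _ ≤ (w' - w) * (α * F w' / C) :=
          mul_le_mul_of_nonneg_left hφle (by linarith)
      linarith
    have : F w' * (1 - α * (w' - w) / C) = F w' - (w' - w) * (α * F w' / C) := by
      field_simp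
    rw [this]; linarith
  -- the discrete Grönwall iteration
  set x : ℝ := α * (C - β) / C with hx
  have hx0 : 0 ≤ x := by
    apply div_nonneg _ (le_of_lt hC); nlinarith
  have key : ∀ n : ℕ, (x < n) →
      Real.log (U * C / α) - Real.log (L * β) ≤ -(n : ℝ) * Real.log (1 - x / n) := by
    intro n hn
    have hnpos : (0:ℝ) < n := lt_of_le_of_lt hx0 hn
    set δ : ℝ := (C - β) / n with hδ
    have hδ0 : 0 ≤ δ := by apply div_nonneg _ (le_of_lt hnpos); linarith
    have hfac : α * δ / C = x / n := by
      rw [hx, hδ]; ring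
    have hfacpos : 0 < 1 - x / n := by
      rw [sub_pos, div_lt_one hnpos]; exact hn
    -- induction: F (β + k δ) * (1 - x/n)^k ≤ F β for k ≤ n
    have hind : ∀ k : ℕ, k ≤ n → F (β + k * δ) * (1 - x / n) ^ k ≤ F β := by
      intro k hk
      induction k with
      | zero => simp
      | succ m ih =>
        have hm : m ≤ n := le_trans (Nat.le_succ m) hk
        have hmem : ∀ j : ℕ, j ≤ n → β + (j:ℝ) * δ ≤ C := by
          intro j hj
          have : (j:ℝ) * δ ≤ (n:ℝ) * δ :=
            mul_le_mul_of_nonneg_right (by exact_mod_cast hj) hδ0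
          have hnδ : (n:ℝ) * δ = C - β := by
            rw [hδ]; field_simp
          linarith
        have hw : β ≤ β + (m:ℝ) * δ := le_add_of_nonneg_right (by positivity)
        have hww : β + (m:ℝ) * δ ≤ β + ((m+1:ℕ):ℝ) * δ := by
          push_cast; nlinarith
        have hw' : β + ((m+1:ℕ):ℝ) * δ ≤ C := hmem (m+1) hk
        have hs := hstep (β + (m:ℝ) * δ) (β + ((m+1:ℕ):ℝ) * δ) hw hww hw'
        have hdiff : (β + ((m+1:ℕ):ℝ) * δ) - (β + (m:ℝ) * δ) = δ := by
          push_cast; ring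
        rw [hdiff, hfac] at hs
        calc F (β + ((m+1:ℕ):ℝ) * δ) * (1 - x / n) ^ (m + 1)
            = (F (β + ((m+1:ℕ):ℝ) * δ) * (1 - x / n)) * (1 - x / n) ^ m := by ring
          _ ≤ F (β + (m:ℝ) * δ) * (1 - x / n) ^ m := by
              apply mul_le_mul_of_nonneg_right hs (pow_nonneg (le_of_lt hfacpos) m)
          _ ≤ F β := ih hm
    have hC' : β + (n:ℝ) * δ = C := by rw [hδ]; field_simp; ring
    have hfin : F C * (1 - x / n) ^ n ≤ F β := by
      have := hind n le_rfl
      rwa [hC'] at this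
    -- U * C / α ≤ F C
    have hFC : U * C / α ≤ F C := by
      have h := hode C ⟨hβC, le_rfl⟩
      rw [div_le_iff₀ hα0]
      calc U * C ≤ φ C * C := by nlinarith
      _ ≤ α * F C := h
      _ = F C * α := by ring
    have hUCα : 0 < U * C / α := by
      have hU : 0 < U := lt_of_lt_of_le hL hLU
      positivity
    have hmain : (U * C / α) * (1 - x / n) ^ n ≤ L * β := by
      rw [← hFβ]
      calc (U * C / α) * (1 - x / n) ^ n ≤ F C * (1 - x / n) ^ n :=
        mul_le_mul_of_nonneg_right hFC (pow_nonneg (le_of_lt hfacpos) n)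
      _ ≤ F β := hfin
    have hlog := Real.log_le_log (by positivity) hmain
    rw [Real.log_mul (ne_of_gt hUCα) (by positivity), Real.log_pow] at hlog
    linarith
  -- take the limit n → ∞
  have hlim : Filter.Tendsto (fun n : ℕ => -(n : ℝ) * Real.log (1 - x / n))
      Filter.atTop (nhds x) := by
    have h1 : Filter.Tendsto (fun y : ℝ => -(y * Real.log (1 + (-x) / y)))
        Filter.atTop (nhds x) := by
      have := (Real.tendsto_mul_log_one_add_div_atTop (-x)).neg
      simpa using this
    have h2 := h1.comp (tendsto_natCast_atTop_atTop (R := ℝ))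
    exact h2.congr (fun n => by
      simp only [Function.comp_apply]
      rw [neg_div, ← sub_eq_add_neg, neg_mul])
  have hineq : Real.log (U * C / α) - Real.log (L * β) ≤ x := by
    apply ge_of_tendsto hlim
    filter_upwards [Filter.eventually_gt_atTop (Nat.ceil x)] with n hn
    apply key
    calc x ≤ (Nat.ceil x : ℝ) := Nat.le_ceil x
      _ < n := by exact_mod_cast hn
  -- final computation
  have hU : 0 < U := lt_of_lt_of_le hL hLU
  have hlogθ : Real.log θ = Real.log U - Real.log L := by
    rw [hθ, Real.log_div (ne_of_gt hU) (ne_of_gt hL)]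
  have hexp1 : Real.log (U * C / α) = Real.log U + Real.log C - Real.log α := by
    rw [Real.log_div (by positivity) (ne_of_gt hα0), Real.log_mul (ne_of_gt hU) (ne_of_gt hC)]
  have hexp2 : Real.log (L * β) = Real.log L + Real.log β := by
    rw [Real.log_mul (ne_of_gt hL) (ne_of_gt hβpos)]
  have htaylor : Real.log (α * β / C) ≤ α * β / C - 1 :=
    Real.log_le_sub_one_of_pos (by positivity)
  have hexp3 : Real.log (α * β / C) = Real.log α + Real.log β - Real.log C := by
    rw [Real.log_div (by positivity) (ne_of_gt hC), Real.log_mul (ne_of_gt hα0) (ne_of_gt hβpos)]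
  have hsum : α * (C - β) / C + α * β / C = α := by field_simp; ring
  rw [hexp1, hexp2] at hineq
  rw [hexp3] at htaylor
  rw [hlogθ]
  rw [hx] at hineq
  linarith
end

section
/- Let 0 < L ≤ U with θ = U/L, C > 0, and α > 0. Suppose ψ: [L, U] → [0, C] is non-decreasing, satisfies ψ(L) ≥ C/α, ψ(U) ≤ C, and p·ψ(p) − ∫_L^p ψ(u) du ≥ p·C/α for all p ∈ [L, U]. Then α ≥ 1 + ln θ. -/
open Filter Topology

set_option maxHeartbeats 1600000 in
theorem got_necessary_lower_bound (L U C θ α : ℝ) (hL : 0 < L) (hLU : L ≤ U)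
    (hθ : θ = U / L) (hC : 0 < C) (hα : 0 < α)
    (ψ : ℝ → ℝ) (hmono : MonotoneOn ψ (Set.Icc L U))
    (hrange : ∀ p ∈ Set.Icc L U, ψ p ∈ Set.Icc 0 C)
    (hψL : ψ L ≥ C / α) (hψU : ψ U ≤ C)
    (hineq : ∀ p ∈ Set.Icc L U, p * ψ p - (∫ u in L..p, ψ u) ≥ p * C / α) :
    α ≥ 1 + Real.log θ := by
  have hU0 : 0 < U := lt_of_lt_of_le hL hLU
  have hθ0 : 0 < θ := by rw [hθ]; positivity
  have hθ1 : 1 ≤ θ := by rw [hθ]; exact (one_le_div hL).mpr hLU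
  set t := Real.log θ with htdef
  have ht0 : 0 ≤ t := Real.log_nonneg hθ1
  set Φ : ℝ → ℝ := fun x => ∫ u in L..x, ψ u with hΦdef
  have hΦ : ∀ x, Φ x = ∫ u in L..x, ψ u := fun _ => rfl
  have hint : ∀ a b, L ≤ a → a ≤ b → b ≤ U →
      IntervalIntegrable ψ MeasureTheory.volume a b := by
    intro a b ha hab hb
    apply MonotoneOn.intervalIntegrable
    rw [Set.uIcc_of_le hab]
    exact hmono.mono (Set.Icc_subset_Icc ha hb)
  have key : ∀ n : ℕ, 1 ≤ n → 1 + (n : ℝ) * t / (n + t) ≤ α := by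
    intro n hn
    have hn0 : (0:ℝ) < n := by exact_mod_cast hn
    set s := t / n with hsdef
    have hs0 : 0 ≤ s := div_nonneg ht0 hn0.le
    have hns : (n:ℝ) * s = t := by rw [hsdef]; field_simp
    set r := Real.exp s with hrdef
    have hr1 : 1 ≤ r := Real.one_le_exp hs0
    have hr0 : 0 < r := Real.exp_pos s
    set p : ℕ → ℝ := fun i => L * Real.exp (i * s) with hpdef
    have hp0 : p 0 = L := by simp [hpdef]
    have hpn : p n = U := by
      have : p n = L * Real.exp ((n:ℝ) * s) := rfl
      rw [this, hns, htdef, Real.exp_log hθ0, hθ]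
      field_simp
    have hpmono : ∀ i j : ℕ, i ≤ j → p i ≤ p j := by
      intro i j hij
      have : (i:ℝ) * s ≤ (j:ℝ) * s := by
        apply mul_le_mul_of_nonneg_right _ hs0
        exact_mod_cast hij
      exact mul_le_mul_of_nonneg_left (Real.exp_le_exp.mpr this) hL.le
    have hmem : ∀ i : ℕ, i ≤ n → p i ∈ Set.Icc L U := by
      intro i hi
      constructor
      · have : (1:ℝ) ≤ Real.exp ((i:ℝ) * s) :=
          Real.one_le_exp (by positivity)
        calc L = L * 1 := by ring
          _ ≤ L * Real.exp ((i:ℝ) * s) :=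
            mul_le_mul_of_nonneg_left this hL.le
          _ = p i := rfl
      · calc p i ≤ p n := hpmono i n hi
          _ = U := hpn
    have hppos : ∀ i : ℕ, 0 < p i := by
      intro i; exact mul_pos hL (Real.exp_pos _)
    have hpsucc : ∀ i : ℕ, p (i+1) = p i * r := by
      intro i
      have : ((i:ℝ)+1) * s = (i:ℝ) * s + s := by ring
      show L * Real.exp (((i:ℕ)+1 : ℕ) * s) = L * Real.exp ((i:ℝ)*s) * r
      push_cast
      rw [this, Real.exp_add, hrdef]; ring
    -- pointwise inequality rewritten
    have hψlow : ∀ q ∈ Set.Icc L U, C / α + Φ q / q ≤ ψ q := by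
      intro q hq
      have hq0 : 0 < q := lt_of_lt_of_le hL hq.1
      have h := hineq q hq
      rw [ge_iff_le, le_sub_iff_add_le] at h
      calc C / α + Φ q / q = (q * C / α + Φ q) / q := by
            field_simp
        _ ≤ (q * ψ q) / q := by gcongr
        _ = ψ q := by field_simp
    -- recursive step
    have step : ∀ i : ℕ, i < n →
        Φ (p i) * r + (r - 1) * p i * (C / α) ≤ Φ (p (i+1)) := by
      intro i hi
      have hmi := hmem i hi.le
      have hmi1 := hmem (i+1) hi
      have hpi0 := hppos i
      have hle : p i ≤ p (i+1) := hpmono i (i+1) (Nat.le_succ i)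
      have hΦadd : Φ (p (i+1)) = Φ (p i) + ∫ u in p i..p (i+1), ψ u := by
        rw [hΦ, hΦ]
        exact (intervalIntegral.integral_add_adjacent_intervals
          (hint L (p i) le_rfl hmi.1 hmi.2)
          (hint (p i) (p (i+1)) hmi.1 hle hmi1.2)).symm
      have h1 : (p (i+1) - p i) * ψ (p i) ≤ ∫ u in p i..p (i+1), ψ u := by
        have hconst : (∫ u in p i..p (i+1), ψ (p i)) = (p (i+1) - p i) * ψ (p i) := by
          simp [mul_comm]
        rw [← hconst]
        apply intervalIntegral.integral_mono_on hle
          intervalIntegrable_const (hint (p i) (p (i+1)) hmi.1 hle hmi1.2)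
        intro x hx
        exact hmono hmi ⟨le_trans hmi.1 hx.1, le_trans hx.2 hmi1.2⟩ hx.1
      have h2 := hψlow (p i) hmi
      have hmul : p i * (r - 1) * (C / α + Φ (p i) / p i)
          ≤ (p (i+1) - p i) * ψ (p i) := by
        have heq : p (i+1) - p i = p i * (r - 1) := by rw [hpsucc i]; ring
        rw [heq]
        exact mul_le_mul_of_nonneg_left h2
          (mul_nonneg hpi0.le (by linarith))
      have hexp : p i * (r - 1) * (C / α + Φ (p i) / p i)
          = (r - 1) * p i * (C / α) + (r - 1) * Φ (p i) := by
        field_simp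
      rw [hΦadd]
      nlinarith [h1, hmul, hexp]
    -- induction
    have main : ∀ i : ℕ, i ≤ n →
        (C / α) * ((i:ℝ) * (r - 1) / r) * p i ≤ Φ (p i) := by
      intro i
      induction i with
      | zero =>
          intro _
          simp [hp0, hΦ, intervalIntegral.integral_same]
      | succ i ih =>
          intro h
          have hi : i < n := h
          have h1 := ih hi.le
          have h2 := step i hi
          have key2 : (C/α) * ((((i:ℕ)+1 : ℕ):ℝ) * (r-1) / r) * p (i+1)
              = ((C/α) * ((i:ℝ) * (r-1) / r) * p i) * r + (r-1) * p i * (C/α) := by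
            rw [hpsucc i]
            push_cast
            field_simp
          rw [key2]
          nlinarith [mul_le_mul_of_nonneg_right h1 hr0.le, h2]
    -- conclude for this n
    have hmain := main n le_rfl
    rw [hpn] at hmain
    have hψU2 := hψlow U ⟨hLU, le_rfl⟩
    set X := (n:ℝ) * (r - 1) / r with hXdef
    have hΦU : (C/α) * X * U ≤ Φ U := hmain
    clear_value X s r p Φ t
    have hΦUdiv : (C/α) * X ≤ Φ U / U := by
      rw [le_div_iff₀ hU0]; linarith
    have h5 : C/α * (1 + X) ≤ C := by
      have h5a : C/α * (1 + X) = C/α + C/α * X := by ring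
      rw [h5a]
      linarith [hψU2, hΦUdiv, hψU]
    have hCα : 0 < C/α := div_pos hC hα
    have h6 : 1 + X ≤ α := by
      calc 1 + X = (C/α * (1+X)) / (C/α) := by field_simp
        _ ≤ C / (C/α) := by gcongr
        _ = α := by field_simp
    -- now 1 + n*t/(n+t) ≤ 1 + X
    have hnt0 : 0 < (n:ℝ) + t := add_pos_of_pos_of_nonneg hn0 ht0
    have hs1 : (0:ℝ) < 1 + s := add_pos_of_pos_of_nonneg one_pos hs0
    have hre : 1 + s ≤ r := by
      rw [hrdef]; linarith [Real.add_one_le_exp s]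
    have h7 : s / (1 + s) ≤ (r - 1) / r := by
      rw [div_le_div_iff₀ hs1 hr0]
      linarith [hre]
    have h8 : (n:ℝ) * t / (n + t) ≤ X := by
      rw [hXdef, div_le_div_iff₀ hnt0 hr0, ← hns]
      have h9 : s * r ≤ (r - 1) * (1 + s) := by nlinarith [hre]
      nlinarith [mul_le_mul_of_nonneg_left h9 (mul_nonneg hn0.le hn0.le)]
    linarith [h6, h8]
  -- limit n → ∞
  have hlim : Tendsto (fun n : ℕ => 1 + (n:ℝ) * t / (n + t)) atTop (𝓝 (1 + t)) := by
    have h1 : Tendsto (fun n : ℕ => 1 + t / (n:ℝ)) atTop (𝓝 1) := by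
      simpa using tendsto_const_nhds.add (tendsto_const_div_atTop_nhds_zero_nat t)
    have h2 : Tendsto (fun n : ℕ => t / (1 + t / (n:ℝ))) atTop (𝓝 t) := by
      have := (tendsto_const_nhds (x := t) (f := atTop (α := ℕ))).div h1 one_ne_zero
      rw [div_one] at this; exact this
    have h3 : Tendsto (fun n : ℕ => 1 + t / (1 + t / (n:ℝ))) atTop (𝓝 (1 + t)) :=
      tendsto_const_nhds.add h2
    apply h3.congr'
    filter_upwards [eventually_ge_atTop 1] with n hn
    have hn0 : (0:ℝ) < n := by exact_mod_cast hn
    have hnt0 : (0:ℝ) < (n:ℝ) + t := by linarith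
    field_simp
  exact le_of_tendsto hlim (eventually_atTop.mpr ⟨1, key⟩)
end

section
/- Let 0 < L ≤ U with θ = U/L, C > 0, and α = 1 + ln θ. Define ψ(p) = (C/α)·(1 + ln(p/L)) for p ∈ [L, U]. Then ψ is non-decreasing, ψ(L) = C/α, ψ(U) = C, and p·ψ(p) − ∫_L^p ψ(u) du = p·C/α for all p ∈ [L, U]. -/
theorem got_optimal_utilization (L U C θ α : ℝ) (hL : 0 < L) (hLU : L ≤ U)
    (hθ : θ = U / L) (hC : 0 < C) (hα : α = 1 + Real.log θ)
    (ψ : ℝ → ℝ) (hψ : ∀ p : ℝ, ψ p = (C / α) * (1 + Real.log (p / L))) :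
    MonotoneOn ψ (Set.Icc L U) ∧ ψ L = C / α ∧ ψ U = C ∧
      ∀ p ∈ Set.Icc L U, p * ψ p - (∫ u in L..p, ψ u) = p * C / α := by
  have hθ1 : 1 ≤ θ := by
    rw [hθ]; exact (one_le_div hL).mpr hLU
  have hlogθ : 0 ≤ Real.log θ := Real.log_nonneg hθ1
  have hα0 : 0 < α := by rw [hα]; linarith
  have hcoef : 0 ≤ C / α := le_of_lt (div_pos hC hα0)
  refine ⟨?_, ?_, ?_, ?_⟩
  · intro x hx y hy hxy
    rw [hψ x, hψ y]
    have hx0 : 0 < x := lt_of_lt_of_le hL hx.1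
    apply mul_le_mul_of_nonneg_left _ hcoef
    have : Real.log (x / L) ≤ Real.log (y / L) := by
      apply Real.log_le_log (div_pos hx0 hL)
      exact div_le_div_of_nonneg_right hxy hL.le
    linarith
  · rw [hψ L, div_self hL.ne', Real.log_one]; ring
  · rw [hψ U, ← hθ, ← hα, div_mul_cancel₀ _ hα0.ne']
  · intro p hp
    have hp0 : 0 < p := lt_of_lt_of_le hL hp.1
    have hint : (∫ u in L..p, ψ u) = (C / α) * (p * Real.log (p / L)) := by
      have key : ∀ x ∈ Set.uIcc L p, HasDerivAt
          (fun u => (C / α) * (u * (Real.log u - Real.log L))) (ψ x) x := by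
        intro x hx
        rw [Set.uIcc_of_le hp.1] at hx
        have hx0 : 0 < x := lt_of_lt_of_le hL hx.1
        have h1 : HasDerivAt (fun u : ℝ => u * (Real.log u - Real.log L))
            (1 * (Real.log x - Real.log L) + x * x⁻¹) x := by
          exact (hasDerivAt_id x).mul ((Real.hasDerivAt_log hx0.ne').sub_const _)
        have h2 := h1.const_mul (C / α)
        refine h2.congr_deriv ?_
        rw [hψ x, Real.log_div hx0.ne' hL.ne', mul_inv_cancel₀ hx0.ne']
        ring
      have hcont : IntervalIntegrable ψ MeasureTheory.volume L p := by
        apply ContinuousOn.intervalIntegrable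
        intro x hx
        rw [Set.uIcc_of_le hp.1] at hx
        have hx0 : 0 < x := lt_of_lt_of_le hL hx.1
        have : ContinuousAt ψ x := by
          have : ContinuousAt (fun u => (C / α) * (1 + Real.log (u / L))) x := by
            apply ContinuousAt.mul continuousAt_const
            apply ContinuousAt.add continuousAt_const
            exact (Real.continuousAt_log (by positivity)).comp
              ((continuousAt_id).div continuousAt_const hL.ne')
          exact this.congr (Filter.Eventually.of_forall fun u => (hψ u).symm)
        exact this.continuousWithinAt
      rw [intervalIntegral.integral_eq_sub_of_hasDerivAt key hcont]
      rw [Real.log_div hp0.ne' hL.ne']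
      simp [Real.log_div hp0.ne' hL.ne']
    rw [hint, hψ p]
    field_simp
    ring
end

section
/- For every θ > 1, the equation α − 1 − 1/(α − 1) = ln((α·θ − 1)/(α − 1)) has a unique solution α in (2, ∞), and this solution satisfies 1 + ln θ < α < 2 + ln θ. -/
open Real Set

noncomputable def gfun (θ α : ℝ) : ℝ := α - 1 - 1 / (α - 1) - Real.log ((α * θ - 1) / (α - 1))

lemma gfun_eq (θ α : ℝ) (hθ : 1 < θ) (hα : 2 ≤ α) :
    gfun θ α = α - 1 - 1 / (α - 1) - (Real.log (α * θ - 1) - Real.log (α - 1)) := by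
  have h2 : 0 < α * θ - 1 := by nlinarith
  rw [gfun, Real.log_div (by linarith) (by linarith)]

lemma gfun_mono (θ : ℝ) (hθ : 1 < θ) {a b : ℝ} (ha : 2 ≤ a) (hab : a < b) :
    gfun θ a < gfun θ b := by
  have hb : 2 ≤ b := by linarith
  rw [gfun_eq θ a hθ ha, gfun_eq θ b hθ hb]
  have ha1 : (1:ℝ) ≤ a - 1 := by linarith
  have hb1 : (1:ℝ) ≤ b - 1 := by linarith
  have haθ : 0 < a * θ - 1 := by nlinarith
  have hbθ : 0 < b * θ - 1 := by nlinarith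
  have key : Real.log (b * θ - 1) - Real.log (a * θ - 1) ≤ ((b - a) * θ) / (a * θ - 1) := by
    have h1 := Real.log_le_sub_one_of_pos
      (show 0 < (b * θ - 1) / (a * θ - 1) by positivity)
    rw [Real.log_div (by linarith) (by linarith)] at h1
    have h2 : (b * θ - 1) / (a * θ - 1) - 1 = ((b - a) * θ) / (a * θ - 1) := by
      rw [div_sub_one haθ.ne']
      ring
    linarith
  have hlog2 : Real.log (a - 1) ≤ Real.log (b - 1) := by
    apply Real.log_le_log (by linarith) (by linarith)
  have hinv : 1 / (b - 1) ≤ 1 / (a - 1) := by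
    apply one_div_le_one_div_of_le (by linarith) (by linarith)
  have hfrac : ((b - a) * θ) / (a * θ - 1) < b - a := by
    have hθa : θ < a * θ - 1 := by nlinarith
    have h3 := mul_lt_mul_of_pos_left hθa (sub_pos.mpr hab)
    rw [div_lt_iff₀ haθ]
    linarith
  linarith

lemma gfun_two_neg (θ : ℝ) (hθ : 1 < θ) : gfun θ 2 < 0 := by
  have h := gfun_eq θ 2 hθ le_rfl
  have h1 : (2:ℝ) - 1 = 1 := by norm_num
  have h2 : 0 < Real.log (2 * θ - 1) := Real.log_pos (by linarith)
  rw [h, h1, Real.log_one]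
  norm_num
  linarith

lemma gfun_top_pos (θ : ℝ) (hθ : 1 < θ) : 0 < gfun θ (2 + Real.log θ) := by
  set L := Real.log θ with hLdef
  have hL : 0 < L := Real.log_pos hθ
  have hθ0 : 0 < θ := by linarith
  have huL : 0 < 1 + L := by linarith
  -- core exponential inequality
  set u := L / (2 * (1 + L)) with hu_def
  have h1 : 1 + u ≤ Real.exp u := by linarith [Real.add_one_le_exp u]
  have h1p : (0:ℝ) ≤ 1 + u := by positivity
  have h2 : Real.exp (L / (1 + L)) = Real.exp u ^ 2 := by
    rw [sq, ← Real.exp_add]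
    congr 1
    rw [hu_def]
    field_simp
    ring
  have h3 : (1 + u) ^ 2 ≤ Real.exp (L / (1 + L)) := by
    rw [h2]
    exact pow_le_pow_left₀ h1p h1 2
  have h4 : (1 + L) * (1 + u) ^ 2 = 2 * L + 1 + L ^ 2 / (4 * (1 + L)) := by
    rw [hu_def]
    field_simp
    ring
  have h4' : (1 + L) * (1 + u) ^ 2 ≤ (1 + L) * Real.exp (L / (1 + L)) :=
    mul_le_mul_of_nonneg_left h3 huL.le
  have hsq : 0 < L ^ 2 / (4 * (1 + L)) := by positivity
  have h5 : 1 + 2 * L < (1 + L) * Real.exp (L / (1 + L)) := by linarith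
  have h6 : 1 - L ≤ Real.exp (-L) := by linarith [Real.add_one_le_exp (-L)]
  have h7 : (2 + L) - Real.exp (-L) < (1 + L) * Real.exp (L / (1 + L)) := by linarith
  have h8 : ((2 + L) - Real.exp (-L)) * Real.exp L
      < (1 + L) * Real.exp (L / (1 + L)) * Real.exp L :=
    mul_lt_mul_of_pos_right h7 (Real.exp_pos L)
  have h9 : Real.exp (-L) * Real.exp L = 1 := by
    rw [← Real.exp_add]; simp
  have hθL : θ = Real.exp L := (Real.exp_log hθ0).symm
  have hcore : (2 + L) * θ - 1 < (1 + L) * (Real.exp L * Real.exp (L / (1 + L))) := by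
    rw [hθL]; nlinarith [h8, h9]
  have hpos : 0 < (2 + L) * θ - 1 := by nlinarith
  have hlog : Real.log ((2 + L) * θ - 1) < Real.log (1 + L) + (L + L / (1 + L)) := by
    rw [Real.log_lt_iff_lt_exp hpos, Real.exp_add, Real.exp_add, Real.exp_log huL]
    linarith [hcore]
  have heq : (1 + L) - 1 / (1 + L) = L + L / (1 + L) := by
    field_simp
    ring
  have hge : (2:ℝ) ≤ 2 + L := by linarith
  rw [gfun_eq θ (2 + L) hθ hge]
  have e1 : (2:ℝ) + L - 1 = 1 + L := by ring
  rw [e1]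
  linarith

lemma gfun_low_neg (θ : ℝ) (hθ : 1 < θ) (h2 : 2 ≤ 1 + Real.log θ) :
    gfun θ (1 + Real.log θ) < 0 := by
  set L := Real.log θ with hLdef
  have hL : (1:ℝ) ≤ L := by linarith
  have hθ0 : 0 < θ := by linarith
  rw [gfun_eq θ (1 + L) hθ h2]
  have e1 : (1:ℝ) + L - 1 = L := by ring
  rw [e1]
  have hlt : Real.log (L * θ) < Real.log ((1 + L) * θ - 1) := by
    apply Real.log_lt_log (by positivity)
    nlinarith
  have hm : Real.log (L * θ) = Real.log L + L := by
    rw [Real.log_mul (by linarith) (by linarith), hLdef]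
  have hinv : 0 < 1 / L := by positivity
  linarith

theorem fomkp_separable_cr_equation (θ : ℝ) (hθ : 1 < θ) :
    (∃! α : ℝ, 2 < α ∧ α - 1 - 1 / (α - 1) = Real.log ((α * θ - 1) / (α - 1))) ∧
    ∀ α : ℝ, 2 < α → α - 1 - 1 / (α - 1) = Real.log ((α * θ - 1) / (α - 1)) →
      1 + Real.log θ < α ∧ α < 2 + Real.log θ := by
  have hL : 0 < Real.log θ := Real.log_pos hθ
  set L := Real.log θ with hLdef
  have hiff : ∀ α : ℝ, (α - 1 - 1 / (α - 1) = Real.log ((α * θ - 1) / (α - 1))) ↔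
      gfun θ α = 0 := by
    intro α
    rw [gfun]
    constructor <;> intro h <;> linarith
  have hg2 : gfun θ 2 < 0 := gfun_two_neg θ hθ
  have hgt : 0 < gfun θ (2 + L) := gfun_top_pos θ hθ
  have hle : (2:ℝ) ≤ 2 + L := by linarith
  have hne1 : ∀ x ∈ Icc (2:ℝ) (2 + L), x - 1 ≠ 0 := by
    intro x hx
    have := hx.1
    intro h
    linarith
  have hcont : ContinuousOn (gfun θ) (Icc 2 (2 + L)) := by
    unfold gfun
    apply ContinuousOn.sub
    · apply ContinuousOn.sub
      · exact (continuous_id.sub continuous_const).continuousOn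
      · exact ContinuousOn.div continuousOn_const
          ((continuous_id.sub continuous_const).continuousOn) hne1
    · apply ContinuousOn.log
      · apply ContinuousOn.div
        · exact ((continuous_id.mul continuous_const).sub continuous_const).continuousOn
        · exact (continuous_id.sub continuous_const).continuousOn
        · exact hne1
      · intro x hx
        have hx2 := hx.1
        have hd1 : 0 < x - 1 := by linarith
        have hd2 : 0 < x * θ - 1 := by nlinarith
        positivity
  have hivt := intermediate_value_Icc hle hcont
  obtain ⟨c, hcmem, hgc⟩ := hivt ⟨hg2.le, hgt.le⟩
  have hc2 : 2 < c := by
    rcases eq_or_lt_of_le hcmem.1 with h | h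
    · exfalso; rw [← h] at hgc; linarith
    · exact h
  -- uniqueness / bounds helper
  have huniq : ∀ β : ℝ, 2 < β → gfun θ β = 0 → β = c := by
    intro β hβ hgβ
    rcases lt_trichotomy β c with h | h | h
    · exfalso
      have := gfun_mono θ hθ hβ.le h
      rw [hgβ, hgc] at this
      exact lt_irrefl 0 this
    · exact h
    · exfalso
      have := gfun_mono θ hθ hc2.le h
      rw [hgβ, hgc] at this
      exact lt_irrefl 0 this
  constructor
  · refine ⟨c, ⟨hc2, (hiff c).mpr hgc⟩, ?_⟩
    intro β ⟨hβ2, hβeq⟩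
    exact huniq β hβ2 ((hiff β).mp hβeq)
  · intro α hα2 hαeq
    have hgα : gfun θ α = 0 := (hiff α).mp hαeq
    constructor
    · by_cases hL1 : L ≤ 1
      · linarith
      · push_neg at hL1
        have h2 : (2:ℝ) ≤ 1 + L := by linarith
        have hlow := gfun_low_neg θ hθ (by rw [← hLdef]; exact h2)
        rw [← hLdef] at hlow
        by_contra hcon
        push_neg at hcon
        rcases eq_or_lt_of_le hcon with h | h
        · rw [h] at hgα; linarith
        · have := gfun_mono θ hθ (by linarith : (2:ℝ) ≤ α) h
          rw [hgα] at this
          linarith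
    · by_contra hcon
      push_neg at hcon
      rcases eq_or_lt_of_le hcon with h | h
      · rw [← h] at hgα; linarith
      · have := gfun_mono θ hθ hle h
        rw [hgα] at this
        linarith
end

section
/- Let 0 < L ≤ U, θ = U/L, C > 0, and let α > 2 satisfy α − 1 − 1/(α − 1) = ln θ. Set β = C/(α − 1) and define φ(w) = L on [0, β) and φ(w) = L·exp(α·w/C − α/(α − 1)) on [β, C]. Then φ is non-decreasing, φ(β) = L, φ(C) = U, and for every w ∈ [β, C], φ(w)·C = α·∫₀^w φ(u) du − L·β. -/
theorem fomkp_aggregate_threshold (L U C θ α β : ℝ) (hL : 0 < L) (hLU : L ≤ U)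
    (hθ : θ = U / L) (hC : 0 < C) (hα : 2 < α)
    (heq : α - 1 - 1 / (α - 1) = Real.log θ)
    (hβ : β = C / (α - 1))
    (φ : ℝ → ℝ)
    (hφ : ∀ w : ℝ, φ w = if w < β then L
        else L * Real.exp (α * w / C - α / (α - 1))) :
    MonotoneOn φ (Set.Icc 0 C) ∧ φ β = L ∧ φ C = U ∧
      ∀ w ∈ Set.Icc β C, φ w * C = α * (∫ u in (0:ℝ)..w, φ u) - L * β := by
  have hα1 : (0:ℝ) < α - 1 := by linarith
  have hα0 : (0:ℝ) < α := by linarith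
  have hβpos : 0 < β := by rw [hβ]; positivity
  have hβC : β < C := by
    rw [hβ, div_lt_iff₀ hα1]; nlinarith
  have hβc : α * β / C - α / (α - 1) = 0 := by
    rw [hβ]; field_simp; ring
  have hφβ : φ β = L := by
    rw [hφ, if_neg (lt_irrefl β), hβc, Real.exp_zero, mul_one]
  have hU : 0 < U := lt_of_lt_of_le hL hLU
  have hθpos : 0 < θ := by rw [hθ]; positivity
  have hφC : φ C = U := by
    rw [hφ, if_neg (not_lt.2 hβC.le)]
    have h1 : α * C / C - α / (α - 1) = Real.log θ := by
      rw [← heq]; field_simp; ring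
    rw [h1, Real.exp_log hθpos, hθ]
    field_simp
  have hmono : MonotoneOn φ (Set.Icc 0 C) := by
    intro a _ b _ hab
    rw [hφ a, hφ b]
    by_cases h1 : b < β
    · rw [if_pos (lt_of_le_of_lt hab h1), if_pos h1]
    · rw [if_neg h1]
      have hb' : β ≤ b := not_lt.1 h1
      have hE : 0 ≤ α * b / C - α / (α - 1) := by
        have h2 : α * β / C ≤ α * b / C := by gcongr
        linarith
      by_cases h2 : a < β
      · rw [if_pos h2]
        nth_rewrite 1 [← mul_one L]
        exact mul_le_mul_of_nonneg_left (Real.one_le_exp hE) hL.le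
      · rw [if_neg h2]
        have h3 : α * a / C - α / (α - 1) ≤ α * b / C - α / (α - 1) := by gcongr
        exact mul_le_mul_of_nonneg_left (Real.exp_le_exp.2 h3) hL.le
  refine ⟨hmono, hφβ, hφC, ?_⟩
  intro w hw
  obtain ⟨hwβ, hwC⟩ := hw
  have hf : ∀ u ∈ Set.uIcc β w, φ u = L * Real.exp (α * u / C - α / (α - 1)) := by
    intro u hu
    rw [Set.uIcc_of_le hwβ] at hu
    rw [hφ, if_neg (not_lt.2 hu.1)]
  have hconst : ∀ u ∈ Set.uIcc (0:ℝ) β, φ u = L := by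
    intro u hu
    rw [Set.uIcc_of_le hβpos.le] at hu
    rcases lt_or_eq_of_le hu.2 with h | h
    · rw [hφ, if_pos h]
    · rw [h, hφβ]
  have hi1 : ∫ u in (0:ℝ)..β, φ u = β * L := by
    rw [intervalIntegral.integral_congr hconst, intervalIntegral.integral_const,
      smul_eq_mul, sub_zero]
  have hcont : Continuous (fun u : ℝ => L * Real.exp (α * u / C - α / (α - 1))) := by
    fun_prop
  have hderiv : ∀ u ∈ Set.uIcc β w,
      HasDerivAt (fun u => L * (C / α) * Real.exp (α * u / C - α / (α - 1)))
        (L * Real.exp (α * u / C - α / (α - 1))) u := by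
    intro u _
    have h1 : HasDerivAt (fun u : ℝ => α * u / C - α / (α - 1)) (α / C) u := by
      simpa using (((hasDerivAt_id u).const_mul α).div_const C).sub_const (α / (α - 1))
    have h2 := (h1.exp).const_mul (L * (C / α))
    have hfac : C / α * (α / C) = 1 := by rw [div_mul_div_comm, mul_comm C α, div_self (mul_ne_zero hα0.ne' hC.ne')]
    have e : L * Real.exp (α * u / C - α / (α - 1))
        = L * (C / α) * (Real.exp (α * u / C - α / (α - 1)) * (α / C)) := by
      linear_combination (-(L * Real.exp (α * u / C - α / (α - 1)))) * hfac
    rw [e]; exact h2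
  have hi2 : ∫ u in β..w, φ u
      = L * (C / α) * Real.exp (α * w / C - α / (α - 1)) - L * (C / α) := by
    rw [intervalIntegral.integral_congr hf,
      intervalIntegral.integral_eq_sub_of_hasDerivAt hderiv (hcont.intervalIntegrable _ _),
      hβc, Real.exp_zero, mul_one]
  have hsub1 : Set.uIcc (0:ℝ) β ⊆ Set.Icc 0 C := by
    rw [Set.uIcc_of_le hβpos.le]
    exact Set.Icc_subset_Icc le_rfl hβC.le
  have hsub2 : Set.uIcc β w ⊆ Set.Icc 0 C := by
    rw [Set.uIcc_of_le hwβ]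
    exact Set.Icc_subset_Icc hβpos.le hwC
  have hsplit : ∫ u in (0:ℝ)..w, φ u = (∫ u in (0:ℝ)..β, φ u) + ∫ u in β..w, φ u := by
    rw [intervalIntegral.integral_add_adjacent_intervals
      ((hmono.mono hsub1).intervalIntegrable)
      ((hmono.mono hsub2).intervalIntegrable)]
  rw [hsplit, hi1, hi2, hφ, if_neg (not_lt.2 hwβ)]
  have key : α * β = C + β := by
    rw [hβ]; field_simp; ring
  have hCne : C ≠ 0 := ne_of_gt hC
  have hαne : α ≠ 0 := ne_of_gt hα0
  field_simp
  ring_nf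
  nlinarith [Real.exp_pos (α * w / C - α / (α - 1)), key]
end

section
/- Let 0 < L < U, C > 0, and let α > 1 satisfy α = ln((U − L)/(α·L − L)). Define φ(w) = L + (U − L)·exp(α·w/C − α) for w ∈ [0, C]. Then φ is non-decreasing, φ(C) = U, φ(0) = L + (U−L)e^{−α} ≥ L, and for every w ∈ [0, C], φ(w)·C ≤ α·∫₀^w φ(u) du + α·(C − w)·L, with equality for all w ∈ [0, C]. -/
theorem variant1_threshold (L U C α : ℝ) (hL : 0 < L) (hU : L < U) (hC : 0 < C)
    (hα : 1 < α) (heq : α = Real.log ((U - L) / (α * L - L)))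
    (φ : ℝ → ℝ)
    (hφ : ∀ w : ℝ, φ w = L + (U - L) * Real.exp (α * w / C - α)) :
    MonotoneOn φ (Set.Icc 0 C) ∧ φ C = U ∧
      (φ 0 = L + (U - L) * Real.exp (-α) ∧ L ≤ φ 0) ∧
      ∀ w ∈ Set.Icc (0:ℝ) C,
        φ w * C ≤ α * (∫ u in (0:ℝ)..w, φ u) + α * (C - w) * L ∧
        φ w * C = α * (∫ u in (0:ℝ)..w, φ u) + α * (C - w) * L := by
  have hαL : 0 < α * L - L := by nlinarith
  have hUL : 0 < U - L := by linarith
  have hα0 : (0:ℝ) < α := by linarith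
  have hα' : α ≠ 0 := ne_of_gt hα0
  have hC' : C ≠ 0 := ne_of_gt hC
  have hx : 0 < (U - L) / (α * L - L) := div_pos hUL hαL
  have hexp : Real.exp α = (U - L) / (α * L - L) := by
    nth_rewrite 1 [heq]
    exact Real.exp_log hx
  have hkey : (U - L) * Real.exp (-α) = α * L - L := by
    rw [Real.exp_neg, hexp]
    field_simp
  have hcont : Continuous φ := by
    have h : φ = fun w => L + (U - L) * Real.exp (α * w / C - α) := funext hφ
    rw [h]
    exact continuous_const.add (continuous_const.mul
      (Real.continuous_exp.comp ((((continuous_const.mul continuous_id).div_const C).sub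
        continuous_const))))
  refine ⟨?_, ?_, ⟨?_, ?_⟩, ?_⟩
  · intro a _ b _ hab
    rw [hφ, hφ]
    have h1 : Real.exp (α * a / C - α) ≤ Real.exp (α * b / C - α) := by
      apply Real.exp_le_exp.mpr
      gcongr
    nlinarith
  · rw [hφ, mul_div_assoc, div_self hC', mul_one, sub_self, Real.exp_zero]; ring
  · rw [hφ]; norm_num
  · rw [hφ]; norm_num; nlinarith
  · intro w _
    have hderiv : ∀ u ∈ Set.uIcc (0:ℝ) w,
        HasDerivAt (fun t => L * t + C / α * (U - L) * Real.exp (α * t / C - α)) (φ u) u := by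
      intro u _
      have h1 : HasDerivAt (fun t : ℝ => α * t / C - α) (α / C) u := by
        simpa using (((hasDerivAt_id u).const_mul α).div_const C).sub_const α
      have h2 := (h1.exp).const_mul (C / α * (U - L))
      have h3 := (hasDerivAt_id u).const_mul L
      have h4 := h3.add h2
      rw [hφ]
      refine HasDerivAt.congr_deriv h4 ?_
      have hCα : C / α * (α / C) = 1 := by field_simp
      linear_combination ((U - L) * Real.exp (α * u / C - α)) * hCα
    have hint : (∫ u in (0:ℝ)..w, φ u)
        = L * w + C / α * (U - L) * (Real.exp (α * w / C - α) - Real.exp (-α)) := by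
      rw [intervalIntegral.integral_eq_sub_of_hasDerivAt hderiv
        (hcont.intervalIntegrable 0 w)]
      norm_num
      ring
    have hint2 : α * (∫ u in (0:ℝ)..w, φ u)
        = α * L * w + C * (U - L) * (Real.exp (α * w / C - α) - Real.exp (-α)) := by
      rw [hint]; field_simp
    have heqn : φ w * C = α * (∫ u in (0:ℝ)..w, φ u) + α * (C - w) * L := by
      rw [hφ, hint2]
      linear_combination C * hkey
    exact ⟨le_of_eq heqn, heqn⟩
end

section
/- Let 0 < L < U, C > 0, and α > 1. Suppose ψ: [L, U] → [0, C] is non-decreasing, ψ(U) ≤ C, and p·ψ(p) − ∫_L^p ψ(u) du + (C − ψ(p))·L ≥ p·C/α for all p ∈ [L, U]. Then C ≥ (C/α)·ln((U − L)/(α·L − L)) whenever α·L > L, which implies α ≥ α*, where α* is the unique solution of α* = ln((U − L)/(α*·L − L)). -/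
open Set MeasureTheory Function

theorem variant1_lower_bound (L U C α : ℝ) (hL : 0 < L) (hU : L < U) (hC : 0 < C)
    (hα : 1 < α)
    (ψ : ℝ → ℝ) (hmono : MonotoneOn ψ (Set.Icc L U))
    (hrange : ∀ p ∈ Set.Icc L U, ψ p ∈ Set.Icc 0 C)
    (hψU : ψ U ≤ C)
    (hineq : ∀ p ∈ Set.Icc L U,
      p * ψ p - (∫ u in L..p, ψ u) + (C - ψ p) * L ≥ p * C / α) :
    (α * L > L → C ≥ (C / α) * Real.log ((U - L) / (α * L - L))) ∧
    ∀ αstar : ℝ, 1 < αstar → αstar = Real.log ((U - L) / (αstar * L - L)) →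
      α ≥ αstar := by
  have hα0 : (0:ℝ) < α := lt_trans one_pos hα
  have hLU : L ≤ U := hU.le
  have hαL : L < α * L := by nlinarith
  -- monotone extension of ψ to all of ℝ
  set ψt : ℝ → ℝ := fun x => ψ (max L (min x U)) with hψt_def
  have hmem : ∀ x : ℝ, max L (min x U) ∈ Icc L U := fun x =>
    ⟨le_max_left _ _, max_le hLU (min_le_right _ _)⟩
  have hψt_mono : Monotone ψt := by
    intro x y hxy
    exact hmono (hmem x) (hmem y) (max_le_max le_rfl (min_le_min_right _ hxy))
  have hψt_eq : ∀ x ∈ Icc L U, ψt x = ψ x := by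
    intro x hx
    simp only [hψt_def]
    rw [min_eq_left hx.2, max_eq_right hx.1]
  -- right-continuous modification
  set g : ℝ → ℝ := ⇑(hψt_mono.stieltjesFunction) with hg_def
  have hg_eq : ∀ x, g x = rightLim ψt x := fun x => hψt_mono.stieltjesFunction_eq x
  have hg_rc : ∀ x, ContinuousWithinAt g (Ici x) x := fun x =>
    (hψt_mono.stieltjesFunction).right_continuous x
  have hg_mono : Monotone g := (hψt_mono.stieltjesFunction).mono
  have hψt_le_g : ∀ x, ψt x ≤ g x := by
    intro x
    rw [hg_eq]
    exact hψt_mono.le_rightLim le_rfl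
  have hg_le : ∀ x, g x ≤ C := by
    intro x
    rw [hg_eq]
    exact (hψt_mono.rightLim_le (lt_add_one x)).trans (hrange _ (hmem (x+1))).2
  have hg_nonneg : ∀ x, 0 ≤ g x := fun x =>
    le_trans (hrange _ (hmem x)).1 (hψt_le_g x)
  -- a.e. equality of ψt and g
  have hae : ψt =ᵐ[volume] g := by
    have hsub : {x | ¬ ψt x = g x} ⊆ {x | ¬ContinuousAt ψt x} := by
      intro x hx hc
      apply hx
      rw [hg_eq]
      exact (hψt_mono.continuousWithinAt_Ioi_iff_rightLim_eq.1
        (hc.continuousWithinAt)).symm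
    exact (MeasureTheory.ae_iff).2
      (measure_mono_null hsub (hψt_mono.countable_not_continuousAt.measure_zero volume))
  have hgi : ∀ a b : ℝ, IntervalIntegrable g volume a b := fun a b =>
    hg_mono.intervalIntegrable
  set Φ : ℝ → ℝ := fun x => ∫ u in L..x, g u with hΦ_def
  -- rewriting the integral of ψ
  have hΦψ : ∀ p ∈ Icc L U, (∫ u in L..p, ψ u) = Φ p := by
    intro p hp
    have h1 : (∫ u in L..p, ψ u) = ∫ u in L..p, ψt u := by
      apply intervalIntegral.integral_congr
      intro x hx
      rw [uIcc_of_le hp.1] at hx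
      exact (hψt_eq x ⟨hx.1, hx.2.trans hp.2⟩).symm
    have h2 : (∫ u in L..p, ψt u) = ∫ u in L..p, g u := by
      apply intervalIntegral.integral_congr_ae
      filter_upwards [hae] with x hx _ using hx
    rw [h1, h2]
  -- the key integral inequality
  have hkey : ∀ p ∈ Icc L U, C * (p/α - L) + Φ p ≤ (p - L) * ψ p := by
    intro p hp
    have h1 := hineq p hp
    rw [hΦψ p hp] at h1
    have hrw : C * (p/α - L) = p * C / α - C * L := by field_simp
    nlinarith [h1]
  -- Part 1
  have part1 : C ≥ C / α * Real.log ((U - L) / (α * L - L)) := by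
    have he : (0:ℝ) < α * L - L := by linarith
    have hd : (0:ℝ) < U - L := by linarith
    by_cases hcase : U ≤ α * L
    · have hlog : Real.log ((U - L) / (α * L - L)) ≤ 0 :=
        Real.log_nonpos (le_of_lt (div_pos (by linarith) he)) ((div_le_one he).2 (by linarith))
      nlinarith [div_pos hC hα0]
    · push_neg at hcase
      set F : ℝ → ℝ := fun x => Φ x / (x - L) - C / α * Real.log (x - L)
          - C / α * ((α - 1) * L) * (x - L)⁻¹ with hF_def
      have hsub2 : Icc (α*L) U ⊆ Icc L U := Icc_subset_Icc hαL.le le_rfl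
      have hxLpos : ∀ x ∈ Icc (α*L) U, (0:ℝ) < x - L := fun x hx => by
        have := hx.1; linarith
      have hxLne : ∀ x ∈ Icc (α*L) U, x - L ≠ 0 := fun x hx => (hxLpos x hx).ne'
      -- continuity of F on [αL, U]
      have hΦc : ContinuousOn Φ (Icc (α*L) U) := by
        have hInt : IntegrableOn g (uIcc L U) volume := by
          rw [uIcc_of_le hLU]
          exact (integrableOn_Icc_iff_integrableOn_Ioc).2 (hgi L U).1
        have := intervalIntegral.continuousOn_primitive_interval hInt
        rw [uIcc_of_le hLU] at this
        exact this.mono hsub2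
      have hsubc : ContinuousOn (fun x : ℝ => x - L) (Icc (α*L) U) :=
        (continuous_id.sub continuous_const).continuousOn
      have hFc : ContinuousOn F (Icc (α*L) U) := by
        apply ContinuousOn.sub
        apply ContinuousOn.sub
        · exact hΦc.div hsubc hxLne
        · exact continuousOn_const.mul (hsubc.log hxLne)
        · exact continuousOn_const.mul (hsubc.inv₀ hxLne)
      -- right derivative of F
      set B' : ℝ → ℝ := fun x =>
        ((x - L) * g x - Φ x - C / α * (x - α * L)) / (x - L)^2 with hB'_def
      have hB' : ∀ x ∈ Ico (α*L) U, HasDerivWithinAt F (B' x) (Ici x) x := by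
        intro x hx
        have hxmem : x ∈ Icc (α*L) U := ⟨hx.1, hx.2.le⟩
        have hne : x - L ≠ 0 := hxLne x hxmem
        have hΦd : HasDerivWithinAt Φ (g x) (Ici x) x := by
          apply intervalIntegral.integral_hasDerivWithinAt_right (hgi L x)
            (hg_mono.measurable.stronglyMeasurable.stronglyMeasurableAtFilter)
          exact (hg_rc x).mono Ioi_subset_Ici_self
        have hid : HasDerivWithinAt (fun y : ℝ => y - L) 1 (Ici x) x :=
          ((hasDerivAt_id x).sub_const L).hasDerivWithinAt
        have hdiv := hΦd.div hid hne
        have hlog : HasDerivWithinAt (fun y : ℝ => Real.log (y - L))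
            ((x - L)⁻¹) (Ici x) x := by
          have h := (Real.hasDerivAt_log hne).comp x
            ((hasDerivAt_id x).sub_const L)
          have h' := h.hasDerivWithinAt (s := Ici x)
          simp [Function.comp] at h'
          exact h'
        have hinv : HasDerivWithinAt (fun y : ℝ => (y - L)⁻¹)
            (-1 / (x - L)^2) (Ici x) x := by
          have := ((hasDerivAt_id x).sub_const L).inv hne
          have h' := this.hasDerivWithinAt (s := Ici x)
          simp at h'
          exact h'
        have hF := (hdiv.sub (hlog.const_mul (C/α))).sub
          (hinv.const_mul (C / α * ((α - 1) * L)))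
        refine hF.congr_deriv ?_
        symm
        simp only [hB'_def, div_eq_mul_inv, mul_one]
        have e1 : (x - L)⁻¹ = (x - L) * ((x - L)^2)⁻¹ := by
          rw [pow_two, mul_inv, ← mul_assoc, mul_inv_cancel₀ hne, one_mul]
        rw [e1]
        ring
      have hbound : ∀ x ∈ Ico (α*L) U, (0:ℝ) ≤ B' x := by
        intro x hx
        have hxmem : x ∈ Icc (α*L) U := ⟨hx.1, hx.2.le⟩
        have hxLU : x ∈ Icc L U := hsub2 hxmem
        have h1 := hkey x hxLU
        have h2 : ψ x ≤ g x := by rw [← hψt_eq x hxLU]; exact hψt_le_g x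
        have h3 : (x - L) * ψ x ≤ (x - L) * g x :=
          mul_le_mul_of_nonneg_left h2 (hxLpos x hxmem).le
        have h4 : C * (x/α - L) = C / α * (x - α * L) := by field_simp <;> ring
        have hnum : (0:ℝ) ≤ (x - L) * g x - Φ x - C / α * (x - α * L) := by
          nlinarith
        exact div_nonneg hnum (sq_nonneg _)
      have hfence : F (α * L) ≤ F U := by
        have := image_le_of_deriv_right_le_deriv_boundary
          (f := fun _ : ℝ => F (α * L)) (f' := fun _ : ℝ => (0:ℝ))
          (a := α * L) (b := U)
          continuousOn_const
          (fun x _ => (hasDerivWithinAt_const x _ _))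
          le_rfl hFc hB' hbound
        exact this ⟨hcase.le, le_rfl⟩
      -- final arithmetic
      have hQ0 : (0:ℝ) ≤ Φ (α * L) / (α * L - L) :=
        div_nonneg (intervalIntegral.integral_nonneg hαL.le fun u _ => hg_nonneg u)
          he.le
      have hPd : Φ U / (U - L) ≤ C - C / α * ((U - α * L)/(U - L)) := by
        rw [div_le_iff₀ hd]
        have h1 := hkey U ⟨hLU, le_rfl⟩
        have h2 : (U - L) * ψ U ≤ (U - L) * C :=
          mul_le_mul_of_nonneg_left hψU hd.le
        have h3 : C * (U/α - L) = C / α * (U - α * L) := by field_simp <;> ring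
        have h4 : (C - C / α * ((U - α * L)/(U - L))) * (U - L)
            = C * (U - L) - C / α * (U - α * L) := by field_simp <;> ring
        linarith
      have hee : C / α * ((α - 1) * L) * (α * L - L)⁻¹ = C / α := by
        rw [show α * L - L = (α - 1) * L by ring]
        have hα1 : α - 1 ≠ 0 := (by linarith : (0:ℝ) < α - 1).ne'
        field_simp
      have hsum' : C / α * ((α - 1) * L) * (U - L)⁻¹
          + C / α * ((U - α * L)/(U - L)) = C / α * ((U - L)/(U-L)) := by
        field_simp <;> ring
      have hdd : C / α * ((U - L)/(U-L)) = C / α := by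
        rw [div_self hd.ne']; ring
      rw [ge_iff_le, Real.log_div hd.ne' he.ne']
      simp only [hF_def] at hfence
      linarith
  refine ⟨fun _ => part1, ?_⟩
  intro αstar h1 h2
  by_contra h
  push_neg at h
  have hCα : 0 < C / α := div_pos hC hα0
  have hX : Real.log ((U - L) / (α * L - L)) ≤ α := by
    by_contra h3
    push_neg at h3
    have hlt : C < C / α * Real.log ((U - L) / (α * L - L)) := by
      calc C = C / α * α := by field_simp
      _ < C / α * Real.log ((U - L) / (α * L - L)) :=
        (mul_lt_mul_iff_right₀ hCα).2 h3
    linarith [part1]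
  have he' : (0:ℝ) < α * L - L := by linarith
  have hstar : α * L - L < αstar * L - L := by nlinarith
  have hmono_log : Real.log ((U - L) / (αstar * L - L))
      < Real.log ((U - L) / (α * L - L)) := by
    have hstar0 : (0:ℝ) < αstar * L - L := by linarith
    apply Real.log_lt_log (div_pos (by linarith) hstar0)
    exact div_lt_div_of_pos_left (by linarith) he' hstar
  rw [← h2] at hmono_log
  linarith
end

section
/- Let C > 0, L > 0, c ≥ 1, θ > 1 with c·θ > 1, and set β = (W(c·θ·ln(c·θ)/e) − ln(c·θ) + 1)·C where W is the Lambert W function. Assume 0 ≤ β ≤ C. Define φ(w) = (L/c)·(e^{w/C} − 1)/(e^{β/C} − 1) for w ∈ [0, β) and φ(w) = (L/c)·exp((w − β)·ln(c·θ)/(C − β)) for w ∈ [β, C]. Then φ is continuous at β with φ(β) = L/c, φ(0) = 0, φ(C) = (L/c)·c·θ = L·θ, and φ is non-decreasing on [0, C]. -/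
theorem variant2_threshold (C L c θ W β : ℝ) (hC : 0 < C) (hL : 0 < L)
    (hc : 1 ≤ c) (hθ : 1 < θ) (hcθ : 1 < c * θ)
    (hW0 : 0 ≤ W)
    (hW : W * Real.exp W = c * θ * Real.log (c * θ) / Real.exp 1)
    (hβ : β = (W - Real.log (c * θ) + 1) * C)
    (hβmem : β ∈ Set.Icc (0:ℝ) C)
    (φ : ℝ → ℝ)
    (hφ : ∀ w : ℝ, φ w = if w < β
        then (L / c) * (Real.exp (w / C) - 1) / (Real.exp (β / C) - 1)
        else (L / c) * Real.exp ((w - β) * Real.log (c * θ) / (C - β))) :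
    ContinuousWithinAt φ (Set.Icc 0 C) β ∧ φ β = L / c ∧ φ 0 = 0 ∧
      φ C = L * θ ∧ MonotoneOn φ (Set.Icc 0 C) := by
  have hc0 : (0:ℝ) < c := lt_of_lt_of_le one_pos hc
  have hcθ0 : (0:ℝ) < c * θ := lt_trans one_pos hcθ
  set t := Real.log (c * θ) with ht_def
  have ht : 0 < t := Real.log_pos hcθ
  have hect : Real.exp t = c * θ := Real.exp_log hcθ0
  have he1 : (0:ℝ) < Real.exp 1 := Real.exp_pos 1
  have he1' : (1:ℝ) < Real.exp 1 := by
    have := Real.exp_one_gt_d9; linarith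
  have hβC : β < C := by
    rcases lt_or_eq_of_le hβmem.2 with h | h
    · exact h
    · exfalso
      have hWt : W = t := by
        have h1 : (W - t + 1) * C = C := by rw [← hβ, h]
        nlinarith
      rw [hWt, hect] at hW
      rw [eq_div_iff he1.ne'] at hW
      nlinarith [mul_pos ht hcθ0]
  have hβ0 : 0 < β := by
    rcases lt_or_eq_of_le hβmem.1 with h | h
    · exact h
    · exfalso
      have hWt : W = t - 1 := by
        have h1 : (W - t + 1) * C = 0 := by rw [← hβ, ← h]
        nlinarith
      rw [hWt, Real.exp_sub, hect] at hW
      field_simp at hW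
      nlinarith [hcθ0]
  have hCβ : 0 < C - β := sub_pos.2 hβC
  have hD : 0 < Real.exp (β / C) - 1 := by
    have hpos : 0 < β / C := div_pos hβ0 hC
    have := Real.add_one_lt_exp (ne_of_gt hpos)
    linarith
  have hLc : (0:ℝ) < L / c := div_pos hL hc0
  have hφfun : φ = fun w => if w < β
      then (L / c) * (Real.exp (w / C) - 1) / (Real.exp (β / C) - 1)
      else (L / c) * Real.exp ((w - β) * t / (C - β)) := funext hφ
  have hcont : Continuous φ := by
    rw [hφfun]
    refine Continuous.if ?_ ?_ ?_
    · intro a ha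
      have haβ : a = β := by
        have hfr : frontier {x : ℝ | x < β} = {β} := frontier_Iio
        rw [hfr] at ha; exact ha
      subst haβ
      rw [mul_div_assoc, div_self hD.ne', mul_one]
      simp
    · fun_prop
    · fun_prop
  have hφβ : φ β = L / c := by
    rw [hφ, if_neg (lt_irrefl β)]
    simp
  have hφ0 : φ 0 = 0 := by
    rw [hφ, if_pos hβ0]
    simp
  have hφC : φ C = L * θ := by
    rw [hφ, if_neg (not_lt.2 hβC.le)]
    have hexp : (C - β) * t / (C - β) = t := by
      field_simp
    rw [hexp, hect]
    field_simp
  refine ⟨hcont.continuousAt.continuousWithinAt, hφβ, hφ0, hφC, ?_⟩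
  intro x hx y hy hxy
  rw [hφ x, hφ y]
  by_cases hxβ : x < β
  · by_cases hyβ : y < β
    · rw [if_pos hxβ, if_pos hyβ]
      have h1 : Real.exp (x / C) ≤ Real.exp (y / C) := by
        apply Real.exp_le_exp.2
        gcongr
      gcongr
    · rw [if_pos hxβ, if_neg hyβ]
      have h1 : (L / c) * (Real.exp (x / C) - 1) / (Real.exp (β / C) - 1) ≤ L / c := by
        rw [div_le_iff₀ hD]
        have h2 : Real.exp (x / C) ≤ Real.exp (β / C) := by
          apply Real.exp_le_exp.2
          gcongr
        nlinarith
      have h3 : L / c ≤ (L / c) * Real.exp ((y - β) * t / (C - β)) := by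
        nth_rewrite 1 [← mul_one (L / c)]
        gcongr
        apply Real.one_le_exp
        apply div_nonneg _ hCβ.le
        exact mul_nonneg (by linarith [not_lt.1 hyβ]) ht.le
      linarith
  · have hyβ : ¬ y < β := fun h => hxβ (lt_of_le_of_lt hxy h)
    rw [if_neg hxβ, if_neg hyβ]
    gcongr
end

section
/- Let 0 < L ≤ U, C > 0, α > 0, and suppose ψ: [L, U] → [0, C] is non-decreasing and satisfies p·ψ(p) − ∫_L^p ψ(u) du ≥ p·C/α for all p ∈ [L, U]. Then ψ(p) ≥ (C/α)·(1 + ln(p/L)) for all p ∈ [L, U]. -/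
open MeasureTheory Set Filter Topology

theorem utilization_gronwall_bound (L U C α : ℝ) (hL : 0 < L) (hLU : L ≤ U)
    (hC : 0 < C) (hα : 0 < α)
    (ψ : ℝ → ℝ) (hmono : MonotoneOn ψ (Set.Icc L U))
    (hrange : ∀ p ∈ Set.Icc L U, ψ p ∈ Set.Icc 0 C)
    (hineq : ∀ p ∈ Set.Icc L U, p * ψ p - (∫ u in L..p, ψ u) ≥ p * C / α) :
    ∀ p ∈ Set.Icc L U, ψ p ≥ (C / α) * (1 + Real.log (p / L)) := by
  set F : ℝ → ℝ := fun x => ∫ u in L..x, ψ u with hFdef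
  have hInt : ∀ a ∈ Set.Icc L U, ∀ b ∈ Set.Icc L U,
      IntervalIntegrable ψ volume a b := fun a ha b hb =>
    (hmono.mono (Set.uIcc_subset_Icc ha hb)).intervalIntegrable
  have hLmem : L ∈ Set.Icc L U := ⟨le_refl L, hLU⟩
  have hUmem : U ∈ Set.Icc L U := ⟨hLU, le_refl U⟩
  have huIcc : Set.uIcc L U = Set.Icc L U := Set.uIcc_of_le hLU
  -- continuity of F on [L, U]
  have hFcont : ContinuousOn F (Set.Icc L U) := by
    have h := intervalIntegral.continuousOn_primitive_interval'
      (hInt L hLmem U hUmem) Set.left_mem_uIcc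
    rw [huIcc] at h
    exact h
  -- the auxiliary function
  set f : ℝ → ℝ := fun x => (C / α) * Real.log (x / L) - F x / x with hfdef
  have hpos : ∀ x ∈ Set.Icc L U, 0 < x := fun x hx => lt_of_lt_of_le hL hx.1
  have hfcont : ContinuousOn f (Set.Icc L U) := by
    apply ContinuousOn.sub
    · exact continuousOn_const.mul ((Real.continuousOn_log.comp
        (continuousOn_id.div_const L) (fun x hx => by
          simp only [Set.mem_compl_iff, Set.mem_singleton_iff]
          exact div_ne_zero (hpos x hx).ne' hL.ne')))
    · exact hFcont.div continuousOn_id (fun x hx => (hpos x hx).ne')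
  -- the key slope bound, by the fencing theorem
  have key : ∀ p ∈ Set.Icc L U, f p ≤ 0 := by
    have := image_le_of_liminf_slope_right_le_deriv_boundary (f := f) (a := L) (b := U)
      (B := fun _ => 0) (B' := fun _ => 0) hfcont
      (by simp [f, F, div_self hL.ne'])
      continuousOn_const
      (fun x _ => hasDerivWithinAt_const x _ 0)
      ?_
    · exact fun p hp => this hp
    intro x hx r hr
    have hxmem : x ∈ Set.Icc L U := Set.mem_Icc_of_Ico hx
    have hx0 : 0 < x := hpos x hxmem
    -- the comparison function
    set φ : ℝ → ℝ := fun z =>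
      (C / α) * ((Real.log (z / L) - Real.log (x / L)) / (z - x)) + F x / (x * z) - ψ x / z
      with hφdef
    -- slope f x z ≤ φ z for z ∈ Ioc x U
    have hslope : ∀ z ∈ Set.Ioc x U, slope f x z ≤ φ z := by
      intro z hz
      have hzmem : z ∈ Set.Icc L U := ⟨le_trans hxmem.1 hz.1.le, hz.2⟩
      have hz0 : 0 < z := hpos z hzmem
      have hzx : 0 < z - x := sub_pos.2 hz.1
      have hFz : F z - F x = ∫ u in x..z, ψ u := by
        rw [hFdef]
        have := intervalIntegral.integral_add_adjacent_intervals
          (hInt L hLmem x hxmem) (hInt x hxmem z hzmem)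
        simp only [F]
        linarith [this]
      have hintlb : (z - x) * ψ x ≤ ∫ u in x..z, ψ u := by
        have : ∫ u in x..z, ψ x ≤ ∫ u in x..z, ψ u := by
          apply intervalIntegral.integral_mono_on hz.1.le intervalIntegrable_const
            (hInt x hxmem z hzmem)
          intro u hu
          exact hmono hxmem ⟨le_trans hxmem.1 hu.1, le_trans hu.2 hz.2⟩ hu.1
        simpa [intervalIntegral.integral_const, smul_eq_mul] using this
      have hFz' : F x + (z - x) * ψ x ≤ F z := by linarith
      rw [slope_def_field]
      rw [hfdef]
      simp only
      rw [div_le_iff₀ hzx]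
      -- goal: f z - f x ≤ φ z * (z - x)
      have expand : φ z * (z - x) =
          (C / α) * (Real.log (z / L) - Real.log (x / L))
          + F x * (z - x) / (x * z) - ψ x * (z - x) / z := by
        rw [hφdef]
        field_simp [hx0.ne', hz0.ne', hzx.ne', hα.ne']
      rw [expand]
      have h1 : (F x + (z - x) * ψ x) / z ≤ F z / z := by gcongr
      have h2 : (F x + (z - x) * ψ x) / z - F x / x
          = ψ x * (z - x) / z - F x * (z - x) / (x * z) := by
        field_simp
        ring
      linarith
    -- φ tends to a nonpositive limit as z → x⁺
    have hlim : Tendsto φ (𝓝[>] x) (𝓝 ((C / α) * (1 / x) + F x / (x * x) - ψ x / x)) := by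
      have h1 : Tendsto (fun z => (Real.log (z / L) - Real.log (x / L)) / (z - x))
          (𝓝[>] x) (𝓝 (1 / x)) := by
        have hd : HasDerivAt (fun z => Real.log (z / L)) (1 / x) x := by
          have : HasDerivAt (fun z : ℝ => z / L) (1 / L) x := (hasDerivAt_id x).div_const L
          have := (Real.hasDerivAt_log (div_ne_zero hx0.ne' hL.ne')).comp x this
          exact this.congr_deriv (by field_simp)
        have ht := hasDerivAt_iff_tendsto_slope.1 hd
        have hsub : Set.Ioi x ⊆ {x}ᶜ := fun z hz => (ne_of_gt hz)
        have ht2 := ht.mono_left (nhdsWithin_mono x hsub)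
        have heq : (fun z => (Real.log (z / L) - Real.log (x / L)) / (z - x))
            = slope (fun z => Real.log (z / L)) x := by
          funext z; rw [slope_def_field]
        rw [heq]
        exact ht2
      have h2 : Tendsto (fun z => F x / (x * z)) (𝓝[>] x) (𝓝 (F x / (x * x))) := by
        apply Tendsto.mono_left _ nhdsWithin_le_nhds
        exact (tendsto_const_nhds.div ((tendsto_const_nhds.mul tendsto_id))
          (by positivity))
      have h3 : Tendsto (fun z => ψ x / z) (𝓝[>] x) (𝓝 (ψ x / x)) := by
        apply Tendsto.mono_left _ nhdsWithin_le_nhds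
        exact tendsto_const_nhds.div tendsto_id hx0.ne'
      exact ((tendsto_const_nhds.mul h1).add h2).sub h3
    have hm : (C / α) * (1 / x) + F x / (x * x) - ψ x / x ≤ 0 := by
      have hxx : (0:ℝ) < x * x := by positivity
      have heq : (C / α) * (1 / x) + F x / (x * x) - ψ x / x
          = (x * C / α + F x - x * ψ x) / (x * x) := by
        field_simp
      rw [heq]
      apply div_nonpos_of_nonpos_of_nonneg _ hxx.le
      have h : x * C / α ≤ x * ψ x - F x := hineq x hxmem
      linarith
    -- conclude: frequently slope f x z < r
    have hev : ∀ᶠ z in 𝓝[>] x, φ z < r := by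
      have : Tendsto φ (𝓝[>] x) (𝓝 ((C / α) * (1 / x) + F x / (x * x) - ψ x / x)) := hlim
      exact this.eventually_lt_const (lt_of_le_of_lt hm hr)
    have hev2 : ∀ᶠ z in 𝓝[>] x, z ∈ Set.Ioc x U :=
      Ioc_mem_nhdsGT_of_mem ⟨le_refl x, hx.2⟩
    have : ∀ᶠ z in 𝓝[>] x, slope f x z < r := by
      filter_upwards [hev, hev2] with z h1 h2
      exact lt_of_le_of_lt (hslope z h2) h1
    exact this.frequently
  -- conclude
  intro p hp
  have hp0 : 0 < p := hpos p hp
  have hkey := key p hp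
  rw [hfdef] at hkey
  simp only at hkey
  have hlog : (C / α) * Real.log (p / L) ≤ F p / p := by linarith
  have h := hineq p hp
  have hψ : F p / p + C / α ≤ ψ p := by
    rw [ge_iff_le] at h
    have : F p + p * C / α ≤ p * ψ p := by
      simp only [F] at h ⊢
      linarith
    calc F p / p + C / α = (F p + p * C / α) / p := by field_simp
      _ ≤ p * ψ p / p := by gcongr
      _ = ψ p := by field_simp
  calc (C / α) * (1 + Real.log (p / L)) = (C / α) * Real.log (p / L) + C / α := by ring
    _ ≤ F p / p + C / α := by linarith
    _ ≤ ψ p := hψ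
end
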